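/- For a complete fuzzy graph K_n (where μ(u,v) = min(σ(u), σ(v)) for all u ≠ v, n ≥ 2), γ_snR(K_n) = 2·min{μ_s(v) : v ∈ V}. -/

import Mathlib

noncomputable section
open scoped Classical
open Finset

/-- A fuzzy graph on a vertex set `V`. -/
structure FuzzyGraph (V : Type*) where
  σ : V → ℝ
  μ : V → V → ℝ
  σ_nonneg : ∀ v, 0 ≤ σ v
  σ_le_one : ∀ v, σ v ≤ 1
  μ_nonneg : ∀ u v, 0 ≤ μ u v
  μ_symm : ∀ u v, μ u v = μ v u
  μ_le : ∀ u v, μ u v ≤ min (σ u) (σ v)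
  μ_irrefl : ∀ v, μ v v = 0

namespace FuzzyGraph

variable {V : Type*} (G : FuzzyGraph V)

/-- The strength of a walk (given as its list of vertices): the minimum
membership value of its edges (1 for walks without edges). -/
def walkStrength (l : List V) : ℝ :=
  ((l.zip l.tail).map fun p => G.μ p.1 p.2).foldr min 1

/-- `l` is a `u`–`v` walk: it starts at `u`, ends at `v`, and consecutive
vertices are joined by edges of positive membership. -/
def IsWalk (u v : V) (l : List V) : Prop :=
  l.head? = some u ∧ l.getLast? = some v ∧ l.Chain' (fun a b => 0 < G.μ a b)

/-- `CONN_G(u,v)`: the maximum strength over all `u`–`v` paths. -/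
def conn (u v : V) : ℝ :=
  sSup {s | ∃ l : List V, G.IsWalk u v l ∧ 2 ≤ l.length ∧ s = G.walkStrength l}

/-- The edge `(u,v)` is strong. -/
def StrongEdge (u v : V) : Prop :=
  0 < G.μ u v ∧ G.μ u v = G.conn u v

/-- `μ_s(u)`: the minimum membership value among strong edges at `u`
(`0` if `u` has no strong neighbor, via `Real.sInf_empty`). -/
def mus (u : V) : ℝ :=
  sInf {x | ∃ v, G.StrongEdge u v ∧ x = G.μ u v}

/-- The strong neighborhood degree `d_SN(v)`. -/
def dSN [Fintype V] (v : V) : ℝ :=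
  ∑ u ∈ Finset.univ.filter (fun u => G.StrongEdge v u), G.σ u

/-- `D` is a strong dominating set. -/
def IsStrongDomSet (D : Finset V) : Prop :=
  ∀ v, v ∉ D → ∃ u ∈ D, G.StrongEdge v u

/-- The weight of a strong dominating set. -/
def domWeight (D : Finset V) : ℝ := ∑ u ∈ D, G.mus u

/-- The strong domination number `γ_s(G)`. -/
def gammaS [Fintype V] : ℝ :=
  sInf {w | ∃ D : Finset V, G.IsStrongDomSet D ∧ w = G.domWeight D}

/-- `f` is a strong-neighbors Roman dominating function (SNRDF). -/
def IsSNRDF (f : V → ℕ) : Prop :=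
  (∀ v, f v ≤ 2) ∧ ∀ v, f v = 0 → ∃ u, G.StrongEdge v u ∧ f u = 2

/-- The weight of an SNRDF. -/
def snrdfWeight [Fintype V] (f : V → ℕ) : ℝ := ∑ v, (f v : ℝ) * G.mus v

/-- The strong-neighbors Roman domination number `γ_snR(G)`. -/
def gammaSnR [Fintype V] : ℝ :=
  sInf {w | ∃ f : V → ℕ, G.IsSNRDF f ∧ w = G.snrdfWeight f}

/-- The fuzzy subgraph induced by the vertices satisfying `p`. -/
def induce (p : V → Prop) : FuzzyGraph {v // p v} where
  σ v := G.σ v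
  μ u v := G.μ u v
  σ_nonneg v := G.σ_nonneg v
  σ_le_one v := G.σ_le_one v
  μ_nonneg u v := G.μ_nonneg u v
  μ_symm u v := G.μ_symm u v
  μ_le u v := G.μ_le u v
  μ_irrefl v := G.μ_irrefl v

/-- The minimum membership value among the strong edges of `G`. -/
def muMin : ℝ := sInf {x | ∃ u v, G.StrongEdge u v ∧ x = G.μ u v}

/-- The complement of a fuzzy graph. -/
def compl : FuzzyGraph V where
  σ := G.σ
  μ u v := if u = v then 0 else min (G.σ u) (G.σ v) - G.μ u v
  σ_nonneg := G.σ_nonneg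
  σ_le_one := G.σ_le_one
  μ_nonneg u v := by
    by_cases h : u = v
    · simp [h]
    · simp only [if_neg h, sub_nonneg]
      exact G.μ_le u v
  μ_symm u v := by
    by_cases h : u = v
    · simp [h]
    · have h' : ¬ v = u := fun hh => h hh.symm
      simp only [if_neg h, if_neg h', min_comm (G.σ u), G.μ_symm u v]
  μ_le u v := by
    by_cases h : u = v
    · subst h
      simp only [if_pos rfl, le_min_iff]
      exact ⟨G.σ_nonneg u, G.σ_nonneg u⟩
    · simp only [if_neg h]
      have := G.μ_nonneg u v
      linarith
  μ_irrefl v := by simp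

end FuzzyGraph


namespace FuzzyGraphAux

open FuzzyGraph

variable {V : Type*} (G : FuzzyGraph V)

lemma walkStrength_cons_cons (a b : V) (t : List V) :
    G.walkStrength (a :: b :: t) = min (G.μ a b) (G.walkStrength (b :: t)) := by
  simp [FuzzyGraph.walkStrength]

lemma walkStrength_le_last :
    ∀ (l : List V) (v : V), l.getLast? = some v → 2 ≤ l.length →
      G.walkStrength l ≤ G.σ v := by
  intro l
  induction l with
  | nil => intro v h hl; simp at hl
  | cons a l ih =>
    intro v hlast hlen
    match l with
    | [] => simp at hlen
    | b :: t =>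
      rw [walkStrength_cons_cons]
      match t with
      | [] =>
        have hbv : b = v := by simpa using hlast
        subst hbv
        have h1 : G.μ a b ≤ G.σ b := le_trans (G.μ_le a b) (min_le_right _ _)
        exact le_trans (min_le_left _ _) h1
      | c :: t' =>
        have hlast' : (b :: c :: t').getLast? = some v := by
          rwa [List.getLast?_cons_cons] at hlast
        have := ih v hlast' (by simp)
        exact le_trans (min_le_right _ _) this

lemma strongEdge_of_ne [Fintype V]
    (hσ : ∀ v, 0 < G.σ v)
    (hc : ∀ u v : V, u ≠ v → G.μ u v = min (G.σ u) (G.σ v))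
    {u v : V} (huv : u ≠ v) : G.StrongEdge u v := by
  have hpos : 0 < G.μ u v := by
    rw [hc u v huv]; exact lt_min (hσ u) (hσ v)
  refine ⟨hpos, ?_⟩
  have hμle1 : G.μ u v ≤ 1 := le_trans (G.μ_le u v)
    (le_trans (min_le_left _ _) (G.σ_le_one u))
  have hmem : G.μ u v ∈ {s | ∃ l : List V, G.IsWalk u v l ∧ 2 ≤ l.length ∧ s = G.walkStrength l} := by
    refine ⟨[u, v], ⟨rfl, rfl, ?_⟩, by simp, ?_⟩
    · exact List.isChain_pair.mpr hpos
    · simp [FuzzyGraph.walkStrength, min_eq_left hμle1]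
  have hub : ∀ s ∈ {s | ∃ l : List V, G.IsWalk u v l ∧ 2 ≤ l.length ∧ s = G.walkStrength l},
      s ≤ G.μ u v := by
    rintro s ⟨l, ⟨hhead, hlast, _⟩, hlen, rfl⟩
    match l with
    | [] => simp at hhead
    | [a] => simp at hlen
    | a :: b :: t =>
      have ha : a = u := by simpa using hhead
      subst ha
      rw [hc a v huv, le_min_iff]
      constructor
      · rw [walkStrength_cons_cons]
        exact le_trans (min_le_left _ _)
          (le_trans (G.μ_le a b) (min_le_left _ _))
      · exact walkStrength_le_last G _ v hlast hlen
  exact le_antisymm (le_csSup ⟨G.μ u v, hub⟩ hmem) (csSup_le ⟨_, hmem⟩ hub)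

lemma mus_nonneg_and_le [Fintype V] (hn : 2 ≤ Fintype.card V)
    (hσ : ∀ v, 0 < G.σ v)
    (hc : ∀ u v : V, u ≠ v → G.μ u v = min (G.σ u) (G.σ v))
    (u : V) : 0 ≤ G.mus u := by
  have hne : {x | ∃ v, G.StrongEdge u v ∧ x = G.μ u v}.Nonempty := by
    obtain ⟨w, hw⟩ := Fintype.exists_ne_of_one_lt_card (by omega) u
    exact ⟨G.μ u w, w, strongEdge_of_ne G hσ hc (Ne.symm hw), rfl⟩
  exact le_csInf hne (by rintro x ⟨v, _, rfl⟩; exact G.μ_nonneg u v)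

end FuzzyGraphAux

/-- for a complete fuzzy graph on at least two vertices,
`γ_snR(K_n) = 2·min{μ_s(v) : v ∈ V}`. -/
theorem gammaSnR_complete {V : Type*} [Fintype V]
    (G : FuzzyGraph V) (hn : 2 ≤ Fintype.card V)
    (hσ : ∀ v, 0 < G.σ v)
    (hc : ∀ u v : V, u ≠ v → G.μ u v = min (G.σ u) (G.σ v)) :
    G.gammaSnR = 2 * sInf {x | ∃ v : V, x = G.mus v} := by
  classical
  set S : Set ℝ := {x | ∃ v : V, x = G.mus v} with hS
  have hSrange : S = Set.range G.mus := by
    ext x; constructor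
    · rintro ⟨v, rfl⟩; exact ⟨v, rfl⟩
    · rintro ⟨v, rfl⟩; exact ⟨v, rfl⟩
  have hSfin : S.Finite := hSrange ▸ Set.finite_range _
  have hSne : S.Nonempty := by
    have : Nonempty V := Fintype.card_pos_iff.mp (by omega)
    exact ⟨G.mus this.some, this.some, rfl⟩
  obtain ⟨v0, hv0⟩ : ∃ v0 : V, sInf S = G.mus v0 := by
    have := hSne.csInf_mem hSfin
    obtain ⟨v0, hv0⟩ := this
    exact ⟨v0, hv0⟩
  have hmus_nonneg : ∀ v, 0 ≤ G.mus v :=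
    fun v => FuzzyGraphAux.mus_nonneg_and_le G hn hσ hc v
  have hm_le : ∀ v, sInf S ≤ G.mus v := fun v =>
    csInf_le (hSfin.bddBelow) ⟨v, rfl⟩
  have hm_nonneg : 0 ≤ sInf S := hv0 ▸ hmus_nonneg v0
  -- the witness function
  set f : V → ℕ := fun v => if v = v0 then 2 else 0 with hf
  have hfSNRDF : G.IsSNRDF f := by
    constructor
    · intro v; by_cases h : v = v0 <;> simp [hf, h]
    · intro v hv
      have hvne : v ≠ v0 := by
        intro h; simp [hf, h] at hv
      exact ⟨v0, FuzzyGraphAux.strongEdge_of_ne G hσ hc hvne, by simp [hf]⟩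
  have hfw : G.snrdfWeight f = 2 * G.mus v0 := by
    rw [FuzzyGraph.snrdfWeight]
    rw [Finset.sum_eq_single v0]
    · simp [hf]
    · intro b _ hb; simp [hf, hb]
    · intro h; simp at h
  have hWmem : 2 * sInf S ∈ {w | ∃ f : V → ℕ, G.IsSNRDF f ∧ w = G.snrdfWeight f} := by
    exact ⟨f, hfSNRDF, by rw [hfw, hv0]⟩
  have hWlb : ∀ w ∈ {w | ∃ f : V → ℕ, G.IsSNRDF f ∧ w = G.snrdfWeight f},
      2 * sInf S ≤ w := by
    rintro w ⟨g, ⟨hg2, hg0⟩, rfl⟩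
    have hterm_nonneg : ∀ v : V, 0 ≤ (g v : ℝ) * G.mus v := fun v =>
      mul_nonneg (by positivity) (hmus_nonneg v)
    by_cases hex : ∃ v, g v = 2
    · obtain ⟨v, hv⟩ := hex
      have h1 : (g v : ℝ) * G.mus v ≤ G.snrdfWeight g :=
        Finset.single_le_sum (fun i _ => hterm_nonneg i) (Finset.mem_univ v)
      have : 2 * sInf S ≤ (g v : ℝ) * G.mus v := by
        rw [hv]; push_cast
        have := hm_le v
        linarith
      linarith
    · push_neg at hex
      have hg1 : ∀ v, 1 ≤ g v := by
        intro v
        rcases Nat.eq_zero_or_pos (g v) with h | h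
        · obtain ⟨u, _, hu2⟩ := hg0 v h
          exact absurd hu2 (hex u)
        · exact h
      obtain ⟨a, b, hab⟩ := Fintype.exists_pair_of_one_lt_card (α := V) (by omega)
      have hsub : ∑ v ∈ ({a, b} : Finset V), (g v : ℝ) * G.mus v ≤ G.snrdfWeight g :=
        Finset.sum_le_sum_of_subset_of_nonneg (Finset.subset_univ _)
          (fun i _ _ => hterm_nonneg i)
      have hpair : ∑ v ∈ ({a, b} : Finset V), (g v : ℝ) * G.mus v
          = (g a : ℝ) * G.mus a + (g b : ℝ) * G.mus b := by
        rw [Finset.sum_pair hab]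
      have hga : sInf S ≤ (g a : ℝ) * G.mus a := by
        have h1 : (1 : ℝ) ≤ (g a : ℝ) := by exact_mod_cast hg1 a
        calc sInf S ≤ G.mus a := hm_le a
          _ = 1 * G.mus a := (one_mul _).symm
          _ ≤ (g a : ℝ) * G.mus a := by
              exact mul_le_mul_of_nonneg_right h1 (hmus_nonneg a)
      have hgb : sInf S ≤ (g b : ℝ) * G.mus b := by
        have h1 : (1 : ℝ) ≤ (g b : ℝ) := by exact_mod_cast hg1 b
        calc sInf S ≤ G.mus b := hm_le b
          _ = 1 * G.mus b := (one_mul _).symm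
          _ ≤ (g b : ℝ) * G.mus b := by
              exact mul_le_mul_of_nonneg_right h1 (hmus_nonneg b)
      rw [hpair] at hsub
      linarith
  rw [FuzzyGraph.gammaSnR]
  exact le_antisymm (csInf_le ⟨2 * sInf S, hWlb⟩ hWmem) (le_csInf ⟨_, hWmem⟩ hWlb)
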